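/- Let G be a finite graph, r ∈ ℕ, L a linear order of V(G), and A ⊆ V(G) nonempty. For v ∈ V(G), define Y[v] = WReach_r[G,L,v] ∩ WReach_r[G,L,A]. Suppose W ≥ 1 and x ≥ 1 are integers such that |WReach_{2r}[G,L,v]| ≤ W for every v ∈ V(G) and the family {WReach_r[G,L,v] : v ∈ V(G)} has VC-dimension at most x. Then the number of distinct sets Y[v], over v ∈ V(G), is at most 1 + 2·|A|·W^{x+1}. -/

import Mathlib

open SimpleGraph

/-- A finite simple graph: a bundled finite vertex type together with a simple graph on it. -/
structure FinGraph : Type 1 where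
  V : Type
  fintypeV : Fintype V
  graph : SimpleGraph V

attribute [instance] FinGraph.fintypeV

/-- The set `S` induces a subgraph of `G` of radius at most `r`:
there is a center `c ∈ S` from which every vertex of `S` is at distance at most `r`
inside the subgraph induced by `S`. -/
def hasRadiusLE {V : Type} (G : SimpleGraph V) (S : Set V) (r : ℕ) : Prop :=
  ∃ c : S, ∀ x : S, (G.induce S).edist c x ≤ (r : ℕ∞)

/-- `H` is a depth-`r` minor of `G`: there is a minor model of `H` in `G` with
pairwise disjoint connected branch sets of radius at most `r`. -/
def IsDepthMinor {W V : Type} (r : ℕ) (H : SimpleGraph W) (G : SimpleGraph V) : Prop :=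
  ∃ I : W → Set V,
    (∀ u, hasRadiusLE G (I u) r) ∧
    (Pairwise fun u v => Disjoint (I u) (I v)) ∧
    (∀ u v, H.Adj u v → ∃ a ∈ I u, ∃ b ∈ I v, G.Adj a b)

/-- A class of finite graphs is nowhere dense if there is `f : ℕ → ℕ` such that
`K_{f r}` is not a depth-`r` minor of any member, for every `r`. -/
def NowhereDense (C : Set FinGraph) : Prop :=
  ∃ f : ℕ → ℕ, ∀ r : ℕ, ∀ G ∈ C, ¬ IsDepthMinor r (completeGraph (Fin (f r))) G.graph

/-- `H` is (isomorphic to) a subgraph of `G`. -/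
def IsSubgraphOf (H G : FinGraph) : Prop :=
  ∃ f : H.V ↪ G.V, ∀ u v, H.graph.Adj u v → G.graph.Adj (f u) (f v)

/-- A class of graphs is monotone if it is closed under taking subgraphs. -/
def MonotoneClass (C : Set FinGraph) : Prop :=
  ∀ G ∈ C, ∀ H : FinGraph, IsSubgraphOf H G → H ∈ C

/-- The closed ball of radius `r` around `v`: `N_r[v]`. -/
def ball {V : Type} (G : SimpleGraph V) (r : ℕ) (v : V) : Set V :=
  {u | G.edist u v ≤ (r : ℕ∞)}

/-- The `r`-neighborhood complexity `ν_r(G,A)`. -/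
noncomputable def nu {V : Type} (G : SimpleGraph V) (r : ℕ) (A : Set V) : ℕ :=
  {S : Set V | ∃ v : V, S = ball G r v ∩ A}.ncard

/-- The value of the `r`-distance profile of `u` at `x`:
`dist_G(u,x)` if it is at most `r`, and `∞` otherwise. -/
noncomputable def profVal {V : Type} (G : SimpleGraph V) (r : ℕ) (u x : V) : ℕ∞ :=
  if G.edist u x ≤ (r : ℕ∞) then G.edist u x else ⊤

/-- The distance profile complexity `ν̂_r(G,A)`: the number of distinct
`r`-distance profiles `π_r[u,A] : A → {0,…,r,∞}` over `u ∈ V(G)`. -/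
noncomputable def nuHat {V : Type} (G : SimpleGraph V) (r : ℕ) (A : Set V) : ℕ :=
  {f : ↥A → ℕ∞ | ∃ u : V, f = fun x : ↥A => profVal G r u ↑x}.ncard

/-- A family `F` of subsets shatters `X` if every subset of `X` is an intersection of
`X` with a member of `F`. -/
def Shatters {U : Type} (F : Set (Set U)) (X : Set U) : Prop :=
  ∀ Y ⊆ X, ∃ S ∈ F, X ∩ S = Y

/-- The family `F` has VC-dimension at most `d`. -/
def VCDimLE {U : Type} (F : Set (Set U)) (d : ℕ) : Prop :=
  ∀ X : Set U, Shatters F X → X.ncard ≤ d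

/-- `WReach_r[G,L,v]`: the set of vertices weakly `r`-reachable from `v` with respect to
the linear order `L`: vertices `u` joined to `v` by a path of length at most `r` on which
`u` is the `L`-least vertex. -/
def WReach {V : Type} (G : SimpleGraph V) (L : LinearOrder V) (r : ℕ) (v : V) : Set V :=
  {u | ∃ p : G.Walk u v, p.IsPath ∧ p.length ≤ r ∧ ∀ x ∈ p.support, L.le u x}

/-- `B` is `r`-independent in `G`: distinct vertices of `B` are at distance more than `r`. -/
def RIndep {V : Type} (G : SimpleGraph V) (r : ℕ) (B : Set V) : Prop :=
  ∀ u ∈ B, ∀ v ∈ B, u ≠ v → (r : ℕ∞) < G.edist u v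

/-- The length of a shortest `A`-avoiding path from `u` to `v`
(all vertices except possibly `v` lie outside `A`); `∞` if there is none. -/
noncomputable def avoidDist {V : Type} (G : SimpleGraph V) (A : Set V) (u v : V) : ℕ∞ :=
  sInf {n : ℕ∞ | ∃ p : G.Walk u v, p.IsPath ∧ (∀ x ∈ p.support, x ≠ v → x ∉ A) ∧ (p.length : ℕ∞) = n}

/-- The value of the `r`-projection profile `ρ_r[u,A]` at `v`. -/
noncomputable def projProfVal {V : Type} (G : SimpleGraph V) (r : ℕ) (A : Set V) (u v : V) : ℕ∞ :=
  if avoidDist G A u v ≤ (r : ℕ∞) then avoidDist G A u v else ⊤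

/-- The `r`-projection `M_r(u,A)` of `u` on `A`. -/
def Mproj {V : Type} (G : SimpleGraph V) (r : ℕ) (A : Set V) (u : V) : Set V :=
  {v ∈ A | avoidDist G A u v ≤ (r : ℕ∞)}

/-- The projection profile complexity `μ̂_r(G,A)`: the number of distinct
`r`-projection profiles `ρ_r[u,A]` over `u ∈ V(G) ∖ A`. -/
noncomputable def muHat {V : Type} (G : SimpleGraph V) (r : ℕ) (A : Set V) : ℕ :=
  {f : ↥A → ℕ∞ | ∃ u : V, u ∉ A ∧ f = fun v : ↥A => projProfVal G r A u ↑v}.ncard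

/-- `D` is a `(Z,r)`-dominator in `G`: every vertex of `Z` is at distance at most `r`
from some vertex of `D`. -/
def IsDominator {V : Type} (G : SimpleGraph V) (r : ℕ) (Z D : Set V) : Prop :=
  ∀ z ∈ Z, ∃ d ∈ D, G.edist z d ≤ (r : ℕ∞)

/-- `D` is a minimum-size `(Z,r)`-dominator in `G`. -/
def IsMinDominator {V : Type} (G : SimpleGraph V) (r : ℕ) (Z D : Set V) : Prop :=
  IsDominator G r Z D ∧ ∀ D' : Set V, IsDominator G r Z D' → D.ncard ≤ D'.ncard

/-- `Z` is an `r`-domination core of `G`: every minimum-size `(Z,r)`-dominator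
is an `r`-dominating set of `G`. -/
def IsDomCore {V : Type} (G : SimpleGraph V) (r : ℕ) (Z : Set V) : Prop :=
  ∀ D : Set V, IsMinDominator G r Z D → IsDominator G r Set.univ D

/-- `ds_r(G,Z)`: the minimum size of a `(Z,r)`-dominator in `G`. -/
noncomputable def dsr {V : Type} (G : SimpleGraph V) (r : ℕ) (Z : Set V) : ℕ :=
  sInf {n : ℕ | ∃ D : Set V, IsDominator G r Z D ∧ D.ncard = n}


section AuxForNumberOfYSets

open Finset in
private lemma auxY_sum_choose_le (W x : ℕ) (hW : 1 ≤ W) (hx : 1 ≤ x) :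
    ∑ i ∈ Finset.range (x + 1), W.choose i ≤ 2 * W ^ x := by
  induction x, hx using Nat.le_induction with
  | base => simp [Finset.sum_range_succ]; omega
  | succ x hx ih =>
    rw [Finset.sum_range_succ]
    rcases Nat.lt_or_ge W 2 with h2 | h2
    · interval_cases W
      have h0 : Nat.choose 1 (x + 1) = 0 := Nat.choose_eq_zero_of_lt (by omega)
      simp only [h0, one_pow] at *; omega
    · have h1 : W.choose (x + 1) ≤ W ^ (x + 1) := Nat.choose_le_pow _ _
      have h2' : 2 * W ^ x ≤ W ^ (x + 1) := by
        rw [pow_succ, mul_comm (W ^ x) W]; exact Nat.mul_le_mul_right _ h2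
      omega

private lemma auxY_ncard_traces_le {V : Type} [Fintype V] (𝓕 : Set (Set V)) (x W : ℕ)
    (hW : 1 ≤ W) (hx : 1 ≤ x) (hVC : VCDimLE 𝓕 x) (S : Set V) (hS : S.ncard ≤ W) :
    {T : Set V | ∃ F ∈ 𝓕, T = F ∩ S}.ncard ≤ 2 * W ^ x := by
  classical
  set 𝒯 : Set (Set V) := {T : Set V | ∃ F ∈ 𝓕, T = F ∩ S} with h𝒯
  set s : Finset V := S.toFinset with hs
  set 𝒜 : Finset (Finset V) := ((fun T : Set V => T.toFinset) '' 𝒯).toFinset with h𝒜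
  have h1 : 𝒯.ncard = 𝒜.card := by
    rw [h𝒜, ← Set.ncard_eq_toFinset_card', Set.ncard_image_of_injective _ (fun a b h => by
      simpa using congrArg (fun t : Finset V => (t : Set V)) h)]
  have hmem𝒜 : ∀ a : Finset V, a ∈ 𝒜 ↔ ∃ F ∈ 𝓕, (a : Set V) = F ∩ S := by
    intro a
    rw [h𝒜, Set.mem_toFinset]
    constructor
    · rintro ⟨T, ⟨F, hF, rfl⟩, rfl⟩
      exact ⟨F, hF, by simp⟩
    · rintro ⟨F, hF, ha⟩
      exact ⟨(a : Set V), ⟨F, hF, ha.symm ▸ rfl⟩, by simp⟩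
  have h2 : 𝒜.shatterer ⊆ s.powerset.filter (fun t => t.card ≤ x) := by
    intro t ht
    rw [Finset.mem_shatterer] at ht
    rw [Finset.mem_filter, Finset.mem_powerset]
    have hts : t ⊆ s := by
      obtain ⟨a, ha, hta⟩ := ht.exists_superset
      refine hta.trans ?_
      obtain ⟨F, hF, haF⟩ := (hmem𝒜 a).1 ha
      intro y hy
      have : y ∈ F ∩ S := haF ▸ hy
      simpa [hs] using this.2
    refine ⟨hts, ?_⟩
    have hshat : Shatters 𝓕 (t : Set V) := by
      intro Y hY
      have hYf : Y.Finite := (Set.toFinite _)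
      obtain ⟨a, ha, hta⟩ := ht (show hYf.toFinset ⊆ t by
        intro y hy; exact hY (by simpa using hy))
      obtain ⟨F, hF, haF⟩ := (hmem𝒜 a).1 ha
      refine ⟨F, hF, ?_⟩
      have hts' : (t : Set V) ⊆ S := by
        intro y hy; have := hts hy; simpa [hs] using this
      have : (t : Set V) ∩ F = (t : Set V) ∩ (F ∩ S) := by
        ext y
        simp only [Set.mem_inter_iff]
        exact ⟨fun h => ⟨h.1, h.2, hts' h.1⟩, fun h => ⟨h.1, h.2.1⟩⟩
      rw [this, ← haF, ← Finset.coe_inter, hta]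
      exact hYf.coe_toFinset
    have := hVC (t : Set V) hshat
    simpa using this
  have h3 : (s.powerset.filter (fun t => t.card ≤ x)).card ≤ 2 * W ^ x := by
    have hsub : s.powerset.filter (fun t => t.card ≤ x)
        ⊆ (Finset.range (x + 1)).biUnion (fun i => s.powersetCard i) := by
      intro t ht
      rw [Finset.mem_filter, Finset.mem_powerset] at ht
      rw [Finset.mem_biUnion]
      exact ⟨t.card, Finset.mem_range.2 (by omega), Finset.mem_powersetCard.2 ⟨ht.1, rfl⟩⟩
    calc (s.powerset.filter (fun t => t.card ≤ x)).card
        ≤ ((Finset.range (x + 1)).biUnion (fun i => s.powersetCard i)).card :=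
          Finset.card_le_card hsub
      _ ≤ ∑ i ∈ Finset.range (x + 1), (s.powersetCard i).card :=
          Finset.card_biUnion_le
      _ = ∑ i ∈ Finset.range (x + 1), s.card.choose i := by
          simp [Finset.card_powersetCard]
      _ ≤ ∑ i ∈ Finset.range (x + 1), W.choose i := by
          refine Finset.sum_le_sum fun i _ => Nat.choose_le_choose _ ?_
          rw [hs, ← Set.ncard_eq_toFinset_card']
          exact hS
      _ ≤ 2 * W ^ x := auxY_sum_choose_le W x hW hx
  calc 𝒯.ncard = 𝒜.card := h1
    _ ≤ 𝒜.shatterer.card := Finset.card_le_card_shatterer _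
    _ ≤ _ := Finset.card_le_card h2
    _ ≤ 2 * W ^ x := h3

private lemma auxY_ncard_biUnion_le_mul {α β : Type} [Finite α] [Finite β]
    (A : Set α) (f : α → Set β) (C : ℕ) (h : ∀ a ∈ A, (f a).ncard ≤ C) :
    (⋃ a ∈ A, f a).ncard ≤ A.ncard * C := by
  have hA : A.Finite := Set.toFinite A
  revert h
  refine Set.Finite.induction_on A hA (fun _ => by simp) ?_
  intro a A' ha hA' ih h
  rw [Set.biUnion_insert]
  calc (f a ∪ ⋃ x ∈ A', f x).ncard ≤ (f a).ncard + (⋃ x ∈ A', f x).ncard :=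
      Set.ncard_union_le _ _
    _ ≤ C + A'.ncard * C := by
      have h1 := ih (fun b hb => h b (Set.mem_insert_of_mem _ hb))
      have h2 := h a (Set.mem_insert _ _)
      omega
    _ = (insert a A').ncard * C := by
      rw [Set.ncard_insert_of_notMem ha hA']
      ring

private lemma auxY_wreach_cross {V : Type} (G : SimpleGraph V) (L : LinearOrder V) (r : ℕ)
    {v w u : V} (hw : w ∈ WReach G L r v) (hu : u ∈ WReach G L r v) (hwu : L.le w u) :
    w ∈ WReach G L (2 * r) u := by
  obtain ⟨p, hp, hpl, hps⟩ := hw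
  obtain ⟨q, hq, hql, hqs⟩ := hu
  refine ⟨(p.append q.reverse).bypass, SimpleGraph.Walk.bypass_isPath _, ?_, ?_⟩
  · calc (p.append q.reverse).bypass.length ≤ (p.append q.reverse).length :=
        SimpleGraph.Walk.length_bypass_le _
    _ = p.length + q.length := by
        rw [SimpleGraph.Walk.length_append, SimpleGraph.Walk.length_reverse]
    _ ≤ 2 * r := by omega
  · intro y hy
    have := SimpleGraph.Walk.support_bypass_subset _ hy
    rw [SimpleGraph.Walk.mem_support_append_iff] at this
    rcases this with h | h
    · exact hps y h
    · exact le_trans hwu (hqs y (by rwa [SimpleGraph.Walk.support_reverse,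
        List.mem_reverse] at h))

end AuxForNumberOfYSets

/-- A bound on the number of distinct sets
`Y[v] = WReach_r[G,L,v] ∩ WReach_r[G,L,A]`. -/
theorem number_of_Y_sets_bound
    {V : Type} [Fintype V] (G : SimpleGraph V) (r : ℕ)
    (L : LinearOrder V) (A : Set V) (hA : A.Nonempty)
    (W x : ℕ) (hW : 1 ≤ W) (hx : 1 ≤ x)
    (hWbound : ∀ v : V, (WReach G L (2 * r) v).ncard ≤ W)
    (hVC : VCDimLE {S : Set V | ∃ v : V, S = WReach G L r v} x) :
    {T : Set V | ∃ v : V, T = WReach G L r v ∩ (⋃ a ∈ A, WReach G L r a)}.ncard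
      ≤ 1 + 2 * A.ncard * W ^ (x + 1) := by
  classical
  set B : Set V := ⋃ a ∈ A, WReach G L r a with hB
  set 𝓕 : Set (Set V) := {S : Set V | ∃ v : V, S = WReach G L r v} with h𝓕
  have hmono : ∀ v : V, WReach G L r v ⊆ WReach G L (2 * r) v := by
    rintro v u ⟨p, hp, hl, hsup⟩
    exact ⟨p, hp, by omega, hsup⟩
  have hBcard : B.ncard ≤ A.ncard * W := by
    refine auxY_ncard_biUnion_le_mul A _ W fun a _ => ?_
    exact le_trans (Set.ncard_le_ncard (hmono a) (Set.toFinite _)) (hWbound a)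
  have hFu : ∀ u : V,
      {T : Set V | ∃ v, T = WReach G L r v ∩ (WReach G L (2 * r) u ∩ B)}.ncard
        ≤ 2 * W ^ x := by
    intro u
    have hS : (WReach G L (2 * r) u ∩ B).ncard ≤ W :=
      le_trans (Set.ncard_le_ncard Set.inter_subset_left (Set.toFinite _)) (hWbound u)
    have heq : {T : Set V | ∃ v, T = WReach G L r v ∩ (WReach G L (2 * r) u ∩ B)}
        = {T : Set V | ∃ F ∈ 𝓕, T = F ∩ (WReach G L (2 * r) u ∩ B)} := by
      ext T
      constructor
      · rintro ⟨v, rfl⟩; exact ⟨_, ⟨v, rfl⟩, rfl⟩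
      · rintro ⟨F, ⟨v, rfl⟩, rfl⟩; exact ⟨v, rfl⟩
    rw [heq]
    exact auxY_ncard_traces_le 𝓕 x W hW hx hVC _ hS
  have hsub : {T : Set V | ∃ v, T = WReach G L r v ∩ B} ⊆
      insert ∅ (⋃ u ∈ B,
        {T : Set V | ∃ v, T = WReach G L r v ∩ (WReach G L (2 * r) u ∩ B)}) := by
    rintro T ⟨v, rfl⟩
    by_cases hT : WReach G L r v ∩ B = ∅
    · exact Set.mem_insert_iff.2 (Or.inl hT)
    · have hTne : (WReach G L r v ∩ B).Nonempty := Set.nonempty_iff_ne_empty.2 hT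
      obtain ⟨u, huT, humax⟩ : ∃ u ∈ WReach G L r v ∩ B,
          ∀ w ∈ WReach G L r v ∩ B, L.le w u := by
        letI := L
        obtain ⟨u, huT, hmax⟩ :=
          Set.Finite.exists_maximalFor id _ (Set.toFinite _) hTne
        refine ⟨u, huT, fun w hw => ?_⟩
        rcases le_total w u with h | h
        · exact h
        · exact hmax hw h
      refine Set.mem_insert_iff.2 (Or.inr ?_)
      refine Set.mem_biUnion huT.2 ?_
      refine ⟨v, ?_⟩
      ext w
      constructor
      · intro hw
        exact ⟨hw.1, auxY_wreach_cross G L r hw.1 huT.1 (humax w hw), hw.2⟩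
      · intro hw
        exact ⟨hw.1, hw.2.2⟩
  calc {T : Set V | ∃ v : V, T = WReach G L r v ∩ (⋃ a ∈ A, WReach G L r a)}.ncard
      ≤ (insert ∅ (⋃ u ∈ B,
          {T : Set V | ∃ v, T = WReach G L r v ∩ (WReach G L (2 * r) u ∩ B)})).ncard :=
        Set.ncard_le_ncard hsub (Set.toFinite _)
    _ ≤ (⋃ u ∈ B,
          {T : Set V | ∃ v, T = WReach G L r v ∩ (WReach G L (2 * r) u ∩ B)}).ncard + 1 :=
        Set.ncard_insert_le _ _
    _ ≤ B.ncard * (2 * W ^ x) + 1 := by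
        refine Nat.add_le_add_right ?_ 1
        exact auxY_ncard_biUnion_le_mul B
          (fun u => {T : Set V | ∃ v, T = WReach G L r v ∩ (WReach G L (2 * r) u ∩ B)})
          (2 * W ^ x) (fun u _ => hFu u)
    _ ≤ (A.ncard * W) * (2 * W ^ x) + 1 := by
        have := Nat.mul_le_mul_right (2 * W ^ x) hBcard
        omega
    _ = 1 + 2 * A.ncard * W ^ (x + 1) := by ring
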